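/- Let ∼ be the equivalence relation on the set of pairs {(u,w) ∈ S_n × S_n : u ≤_k w} generated by the relations (u,w) ∼ (uz, wz) for z ∈ S_k × S_{n−k} such that both products uz and wz are length-additive. Then every ∼-equivalence class contains exactly one pair (x,y) with y Grassmannian, and exactly one pair (x′,y′) with x′ anti-Grassmannian. -/

import Mathlib

/-- The number of inversions of a permutation of Fin n (positions 0,…,n−1
correspond to 1,…,n). -/
def len (n : ℕ) (w : Equiv.Perm (Fin n)) : ℕ :=
  ((Finset.univ : Finset (Fin n × Fin n)).filter fun p => p.1 < p.2 ∧ w p.2 < w p.1).card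

/-- The Bruhat order on S_n: generated by u < u·(a b) when the length increases. -/
def bruhatLE (n : ℕ) (u w : Equiv.Perm (Fin n)) : Prop :=
  Relation.ReflTransGen
    (fun x y => (∃ a b : Fin n, y = x * Equiv.swap a b) ∧ len n x < len n y) u w

/-- A Bruhat cover: u < w and ℓ(w) = ℓ(u) + 1. -/
def bruhatCover (n : ℕ) (u w : Equiv.Perm (Fin n)) : Prop :=
  bruhatLE n u w ∧ u ≠ w ∧ len n w = len n u + 1

/-- σ_k(w) = w([k]) = {w(1),…,w(k)} (0-based: image of {i | i < k}). -/
def sigmaSet (n k : ℕ) (w : Equiv.Perm (Fin n)) : Finset (Fin n) :=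
  (Finset.univ.filter fun i : Fin n => (i : ℕ) < k).image w

/-- A k-cover: a Bruhat cover with u([k]) ≠ w([k]). -/
def kCover (n k : ℕ) (u w : Equiv.Perm (Fin n)) : Prop :=
  bruhatCover n u w ∧ sigmaSet n k u ≠ sigmaSet n k w

/-- The k-Bruhat order: generated by k-covers. -/
def kBruhatLE (n k : ℕ) (u w : Equiv.Perm (Fin n)) : Prop :=
  Relation.ReflTransGen (kCover n k) u w

/-- Grassmannian permutation: increasing on the first k and on the last n−k positions. -/
def IsGrassmannian (n k : ℕ) (w : Equiv.Perm (Fin n)) : Prop :=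
  ∀ i j : Fin n, i < j → ((j : ℕ) < k ∨ k ≤ (i : ℕ)) → w i < w j

/-- Anti-Grassmannian permutation: decreasing on the first k and on the last n−k positions. -/
def IsAntiGrassmannian (n k : ℕ) (w : Equiv.Perm (Fin n)) : Prop :=
  ∀ i j : Fin n, i < j → ((j : ℕ) < k ∨ k ≤ (i : ℕ)) → w j < w i

/-- Membership in the parabolic subgroup S_k × S_{n−k}: z maps [k] to [k]. -/
def InParabolic (n k : ℕ) (z : Equiv.Perm (Fin n)) : Prop :=
  ∀ i : Fin n, ((i : ℕ) < k ↔ (z i : ℕ) < k)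

/-- The generating relation on pairs: (u,w) ∼ (uz,wz) for z ∈ S_k × S_{n−k} with
both products length-additive. -/
def pairMove (n k : ℕ) (p q : Equiv.Perm (Fin n) × Equiv.Perm (Fin n)) : Prop :=
  ∃ z : Equiv.Perm (Fin n), InParabolic n k z ∧
    q = (p.1 * z, p.2 * z) ∧
    len n (p.1 * z) = len n p.1 + len n z ∧
    len n (p.2 * z) = len n p.2 + len n z

namespace S7

open Finset Equiv

variable {n k : ℕ}

lemma len_comp (x z : Perm (Fin n)) :
    len n x = (univ.filter fun p : Fin n × Fin n =>
      p.1 < p.2 ∧ ((z p.1 < z p.2 ∧ x (z p.2) < x (z p.1)) ∨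
                   (z p.2 < z p.1 ∧ x (z p.1) < x (z p.2)))).card := by
  unfold len
  apply Finset.card_nbij' (i := fun q : Fin n × Fin n =>
      if (z⁻¹ q.1 : Fin n) < z⁻¹ q.2 then (z⁻¹ q.1, z⁻¹ q.2) else (z⁻¹ q.2, z⁻¹ q.1))
    (j := fun p : Fin n × Fin n =>
      if (z p.1 : Fin n) < z p.2 then (z p.1, z p.2) else (z p.2, z p.1))
  · intro q hq
    beta_reduce
    simp only [mem_coe, mem_filter, mem_univ, true_and] at hq
    obtain ⟨h1, h2⟩ := hq
    have hne : (z⁻¹ q.1 : Fin n) ≠ z⁻¹ q.2 := fun h => h1.ne (z⁻¹.injective h)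
    by_cases hlt : (z⁻¹ q.1 : Fin n) < z⁻¹ q.2
    · rw [if_pos hlt]
      simp only [mem_coe, mem_filter, mem_univ, true_and]
      exact ⟨hlt, Or.inl (by simpa [Perm.coe_inv, Equiv.apply_symm_apply] using ⟨h1, h2⟩)⟩
    · rw [if_neg hlt]
      simp only [mem_coe, mem_filter, mem_univ, true_and]
      exact ⟨hne.lt_or_gt.resolve_left hlt,
        Or.inr (by simpa [Perm.coe_inv, Equiv.apply_symm_apply] using ⟨h1, h2⟩)⟩
  · intro p hp
    beta_reduce
    simp only [mem_coe, mem_filter, mem_univ, true_and] at hp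
    obtain ⟨h1, h2⟩ := hp
    rcases h2 with h2 | h2
    · rw [if_pos h2.1]
      simp only [mem_coe, mem_filter, mem_univ, true_and]
      exact ⟨h2.1, h2.2⟩
    · rw [if_neg (asymm h2.1)]
      simp only [mem_coe, mem_filter, mem_univ, true_and]
      exact ⟨h2.1, h2.2⟩
  · intro p hp
    beta_reduce
    simp only [mem_coe, mem_filter, mem_univ, true_and] at hp
    obtain ⟨h1, h2⟩ := hp
    by_cases hlt : (z⁻¹ p.1 : Fin n) < z⁻¹ p.2
    · rw [if_pos hlt]
      simp [Perm.coe_inv, Equiv.apply_symm_apply, h1]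
    · rw [if_neg hlt]
      simp [Perm.coe_inv, Equiv.apply_symm_apply, h1, asymm h1]
  · intro q hq
    beta_reduce
    simp only [mem_coe, mem_filter, mem_univ, true_and] at hq
    obtain ⟨h1, h2⟩ := hq
    rcases h2 with h2 | h2
    · rw [if_pos h2.1]
      simp [Perm.coe_inv, Equiv.symm_apply_apply, h1]
    · rw [if_neg (asymm h2.1)]
      simp [Perm.coe_inv, Equiv.symm_apply_apply, h1, asymm h1]

lemma key (x z : Perm (Fin n)) :
    len n (x * z) + 2 * ((univ : Finset (Fin n × Fin n)).filter fun p =>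
        p.1 < p.2 ∧ z p.2 < z p.1 ∧ x (z p.1) < x (z p.2)).card
      = len n x + len n z := by
  rw [len_comp x z]
  unfold len
  simp only [Finset.card_filter]
  simp only [Finset.card_filter, Perm.mul_apply, ← Finset.sum_add_distrib, Finset.mul_sum]
  apply Finset.sum_congr rfl
  intro p _
  by_cases h1 : p.1 < p.2
  · have hz : z p.1 ≠ z p.2 := fun h => h1.ne (z.injective h)
    have hx : x (z p.1) ≠ x (z p.2) := fun h => hz (x.injective h)
    rcases hz.lt_or_gt with hz1 | hz1
    · rcases hx.lt_or_gt with hx1 | hx1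
      · simp [h1, hz1, asymm hz1, hx1, asymm hx1]
      · simp [h1, hz1, asymm hz1, hx1, asymm hx1]
    · rcases hx.lt_or_gt with hx1 | hx1
      · simp [h1, hz1, asymm hz1, hx1, asymm hx1]
      · simp [h1, hz1, asymm hz1, hx1, asymm hx1]
  · simp [h1]

lemma len_add_of_no_cancel (x z : Perm (Fin n))
    (h : ∀ p : Fin n × Fin n, p.1 < p.2 → z p.2 < z p.1 → ¬ x (z p.1) < x (z p.2)) :
    len n (x * z) = len n x + len n z := by
  have hk := key x z
  have : ((univ : Finset (Fin n × Fin n)).filter fun p =>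
      p.1 < p.2 ∧ z p.2 < z p.1 ∧ x (z p.1) < x (z p.2)) = ∅ := by
    apply Finset.filter_eq_empty_iff.mpr
    intro p _
    rintro ⟨h1, h2, h3⟩
    exact h p h1 h2 h3
  rw [this] at hk
  simpa using hk

lemma bruhatLE_len_le {u w : Perm (Fin n)} (h : bruhatLE n u w) : len n u ≤ len n w := by
  induction h with
  | refl => exact le_refl _
  | tail _ step ih => exact ih.trans (le_of_lt step.2)

lemma bruhatLE_eq_of_len_le {u w : Perm (Fin n)} (h : bruhatLE n u w)
    (hle : len n w ≤ len n u) : u = w := by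
  rcases h.cases_tail with heq | ⟨m, hm, step⟩
  · exact heq.symm
  · exact absurd (lt_of_lt_of_le step.2 (hle.trans (bruhatLE_len_le hm))) (lt_irrefl _)

lemma cover_step {u w : Perm (Fin n)} (h : bruhatCover n u w) :
    ∃ a b : Fin n, a < b ∧ w = u * Equiv.swap a b := by
  obtain ⟨hle, hne, hlen⟩ := h
  rcases hle.cases_tail with heq | ⟨m, hm, step⟩
  · exact absurd heq.symm hne
  · obtain ⟨⟨a, b, hw⟩, hlt⟩ := step
    have hmu : u = m := by
      apply bruhatLE_eq_of_len_le hm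
      omega
    subst hmu
    have hab : a ≠ b := by
      rintro rfl
      rw [Equiv.swap_self] at hw
      rw [Perm.mul_refl] at hw
      exact hne hw.symm
    rcases hab.lt_or_gt with h | h
    · exact ⟨a, b, h, hw⟩
    · exact ⟨b, a, h, by rwa [Equiv.swap_comm]⟩

lemma swap_inv_shape {a b : Fin n} (hab : a < b) {p : Fin n × Fin n}
    (h1 : p.1 < p.2) (h2 : Equiv.swap a b p.2 < Equiv.swap a b p.1) :
    (p.1 = a ∧ p.2 = b) ∨ (p.1 = a ∧ a < p.2 ∧ p.2 < b) ∨ (p.2 = b ∧ a < p.1 ∧ p.1 < b) := by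
  by_cases e1a : p.1 = a
  · by_cases e2b : p.2 = b
    · exact Or.inl ⟨e1a, e2b⟩
    · have e2a : p.2 ≠ a := by rintro rfl; exact absurd h1 (by simp [e1a])
      rw [e1a, Equiv.swap_apply_left, Equiv.swap_apply_of_ne_of_ne e2a e2b] at h2
      exact Or.inr (Or.inl ⟨e1a, e1a ▸ h1, h2⟩)
  · by_cases e1b : p.1 = b
    · -- p.1 = b : p.2 > b, contradictions
      have e2a : p.2 ≠ a := fun h => absurd (h ▸ e1b ▸ h1) (asymm hab)
      have e2b : p.2 ≠ b := fun h => absurd (h ▸ e1b ▸ h1) (lt_irrefl _)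
      rw [e1b, Equiv.swap_apply_right, Equiv.swap_apply_of_ne_of_ne e2a e2b] at h2
      exact absurd (h2.trans (hab.trans (e1b ▸ h1))) (lt_irrefl _)
    · rw [Equiv.swap_apply_of_ne_of_ne e1a e1b] at h2
      by_cases e2a : p.2 = a
      · rw [e2a, Equiv.swap_apply_left] at h2
        exact absurd (h1.trans (e2a ▸ hab)) (asymm h2)
      · by_cases e2b : p.2 = b
        · rw [e2b, Equiv.swap_apply_right] at h2
          refine Or.inr (Or.inr ⟨e2b, h2, e2b ▸ h1⟩)
        · rw [Equiv.swap_apply_of_ne_of_ne e2a e2b] at h2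
          exact absurd h1 (asymm h2)

lemma swap_len_facts {u : Perm (Fin n)} {a b : Fin n} (hab : a < b)
    (hlen : len n (u * Equiv.swap a b) = len n u + 1) :
    u a < u b ∧ ∀ c : Fin n, a < c → c < b → ¬(u a < u c ∧ u c < u b) := by
  set s := Equiv.swap a b with hs
  set B := (univ : Finset (Fin n × Fin n)).filter fun p =>
      p.1 < p.2 ∧ s p.2 < s p.1 ∧ u (s p.1) < u (s p.2) with hB
  set B' := (univ : Finset (Fin n × Fin n)).filter fun p =>
      p.1 < p.2 ∧ s p.2 < s p.1 ∧ u p.1 < u p.2 with hB'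
  have k1 := key u s
  have k2 := key (u * s) s
  rw [show u * s * s = u by rw [mul_assoc]; simp [hs, Equiv.swap_mul_self]] at k2
  have hB'eq : ((univ : Finset (Fin n × Fin n)).filter fun p =>
      p.1 < p.2 ∧ s p.2 < s p.1 ∧ (u * s) (s p.1) < (u * s) (s p.2)) = B' := by
    apply Finset.filter_congr
    intro p _
    simp [hs, Perm.mul_apply, Equiv.swap_apply_self]
  rw [hB'eq] at k2
  rw [← hB] at k1
  have hcard : B'.card = B.card + 1 := by omega
  have hne : a ≠ b := ne_of_lt hab
  -- part 1
  have part1 : u a < u b := by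
    by_contra hnab
    have hba : u b < u a := ((u.injective.ne hne).symm.lt_or_gt).resolve_right hnab
    have hmemB : (a, b) ∈ B := by
      simp only [hB, mem_filter, mem_univ, true_and]
      refine ⟨hab, ?_, ?_⟩ <;> simp [hs, hab, hba]
    have hsub : B' ⊆ B.erase (a, b) := by
      intro p hp
      simp only [hB', mem_filter, mem_univ, true_and] at hp
      obtain ⟨h1, h2, h3⟩ := hp
      rcases swap_inv_shape hab h1 h2 with ⟨e1, e2⟩ | ⟨e1, e2, e3⟩ | ⟨e1, e2, e3⟩
      · rw [e1, e2] at h3; exact absurd h3 hnab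
      · rw [Finset.mem_erase]
        constructor
        · rintro rfl; exact absurd e3 (lt_irrefl b)
        · simp only [hB, mem_filter, mem_univ, true_and]
          refine ⟨h1, h2, ?_⟩
          have hp2 : s p.2 = p.2 := Equiv.swap_apply_of_ne_of_ne (ne_of_gt e2) (ne_of_lt e3)
          rw [e1] at h3 ⊢
          rw [Equiv.swap_apply_left, hp2]
          exact hba.trans h3
      · rw [Finset.mem_erase]
        constructor
        · rintro rfl; exact absurd e2 (lt_irrefl a)
        · simp only [hB, mem_filter, mem_univ, true_and]
          refine ⟨h1, h2, ?_⟩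
          have hp1 : s p.1 = p.1 := Equiv.swap_apply_of_ne_of_ne (ne_of_gt e2) (ne_of_lt e3)
          rw [e1] at h3 ⊢
          rw [Equiv.swap_apply_right, hp1]
          exact h3.trans hba
    have h1le : 1 ≤ B.card := Finset.card_pos.mpr ⟨(a, b), hmemB⟩
    have := (Finset.card_le_card hsub).trans_eq (Finset.card_erase_of_mem hmemB)
    omega
  refine ⟨part1, ?_⟩
  rintro c hac hcb ⟨hic1, hic2⟩
  have hca : c ≠ a := ne_of_gt hac
  have hcbne : c ≠ b := ne_of_lt hcb
  have hsubB : B ⊆ B' := by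
    intro p hp
    simp only [hB, mem_filter, mem_univ, true_and] at hp
    obtain ⟨h1, h2, h3⟩ := hp
    simp only [hB', mem_filter, mem_univ, true_and]
    refine ⟨h1, h2, ?_⟩
    rcases swap_inv_shape hab h1 h2 with ⟨e1, e2⟩ | ⟨e1, e2, e3⟩ | ⟨e1, e2, e3⟩
    · rw [e1, e2] at h3
      rw [Equiv.swap_apply_left, Equiv.swap_apply_right] at h3
      exact absurd part1 (asymm h3)
    · have hp2 : s p.2 = p.2 := Equiv.swap_apply_of_ne_of_ne (ne_of_gt e2) (ne_of_lt e3)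
      rw [e1, Equiv.swap_apply_left, hp2] at h3
      rw [e1]
      exact part1.trans h3
    · have hp1 : s p.1 = p.1 := Equiv.swap_apply_of_ne_of_ne (ne_of_gt e2) (ne_of_lt e3)
      rw [e1, Equiv.swap_apply_right, hp1] at h3
      rw [e1]
      exact h3.trans part1
  have hab_mem : (a, b) ∈ B' := by
    simp only [hB', mem_filter, mem_univ, true_and]
    exact ⟨hab, by simp [hs, hab], part1⟩
  have hac_mem : (a, c) ∈ B' := by
    simp only [hB', mem_filter, mem_univ, true_and]
    refine ⟨hac, ?_, hic1⟩
    rw [hs, Equiv.swap_apply_left, Equiv.swap_apply_of_ne_of_ne hca hcbne]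
    exact hcb
  have hab_nB : (a, b) ∉ B := by
    simp only [hB, mem_filter, mem_univ, true_and]
    rintro ⟨-, -, h3⟩
    rw [Equiv.swap_apply_left, Equiv.swap_apply_right] at h3
    exact absurd part1 (asymm h3)
  have hac_nB : (a, c) ∉ B := by
    simp only [hB, mem_filter, mem_univ, true_and]
    rintro ⟨-, -, h3⟩
    rw [Equiv.swap_apply_left, Equiv.swap_apply_of_ne_of_ne hca hcbne] at h3
    exact absurd hic2 (asymm h3)
  have hins : insert (a, b) (insert (a, c) B) ⊆ B' := by
    intro p hp
    rcases Finset.mem_insert.mp hp with rfl | hp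
    · exact hab_mem
    rcases Finset.mem_insert.mp hp with rfl | hp
    · exact hac_mem
    · exact hsubB hp
  have hcard2 : (insert (a, b) (insert (a, c) B)).card = B.card + 2 := by
    rw [Finset.card_insert_of_notMem, Finset.card_insert_of_notMem hac_nB]
    rw [Finset.mem_insert]
    push_neg
    exact ⟨by simp [Prod.ext_iff, hcbne.symm], hab_nB⟩
  have := Finset.card_le_card hins
  omega

lemma mem_sigmaSet_iff {v : Perm (Fin n)} {s : Fin n} :
    s ∈ sigmaSet n k v ↔ (v.symm s : ℕ) < k := by
  unfold sigmaSet
  simp only [Finset.mem_image, mem_filter, mem_univ, true_and]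
  constructor
  · rintro ⟨i, hi, rfl⟩
    simpa using hi
  · intro h
    exact ⟨v.symm s, h, by simp⟩

lemma apply_mem_sigmaSet_iff {v : Perm (Fin n)} {i : Fin n} :
    v i ∈ sigmaSet n k v ↔ (i : ℕ) < k := by
  rw [mem_sigmaSet_iff]
  simp

lemma sigmaSet_mul_parabolic {v z : Perm (Fin n)}
    (hz : ∀ i : Fin n, ((i : ℕ) < k ↔ (z i : ℕ) < k)) :
    sigmaSet n k (v * z) = sigmaSet n k v := by
  ext s
  rw [mem_sigmaSet_iff, mem_sigmaSet_iff]
  have hsymm : ((v * z).symm s : Fin n) = z.symm (v.symm s) := by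
    simp [Equiv.Perm.mul_def, Equiv.symm_trans_apply]
  rw [hsymm]
  have h2 := hz (z.symm (v.symm s))
  rw [Equiv.apply_symm_apply] at h2
  exact h2

lemma swap_parabolic {a b : Fin n} (h : ((a : ℕ) < k ↔ (b : ℕ) < k)) (i : Fin n) :
    ((i : ℕ) < k ↔ (Equiv.swap a b i : ℕ) < k) := by
  by_cases hia : i = a
  · subst hia; rw [Equiv.swap_apply_left]; exact h
  · by_cases hib : i = b
    · subst hib; rw [Equiv.swap_apply_right]; exact h.symm
    · rw [Equiv.swap_apply_of_ne_of_ne hia hib]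

lemma kCover_struct {u w : Perm (Fin n)} (h : kCover n k u w) :
    ∃ a b : Fin n, a < b ∧ (a : ℕ) < k ∧ k ≤ (b : ℕ) ∧ w = u * Equiv.swap a b ∧
      u a < u b ∧ ∀ c : Fin n, a < c → c < b → ¬(u a < u c ∧ u c < u b) := by
  obtain ⟨hcov, hsig⟩ := h
  obtain ⟨a, b, hab, hw⟩ := cover_step hcov
  have hlen : len n (u * Equiv.swap a b) = len n u + 1 := hw ▸ hcov.2.2
  have hside : ¬ (((a : ℕ) < k) ↔ ((b : ℕ) < k)) := by
    intro hiff
    exact hsig (by rw [hw, sigmaSet_mul_parabolic (swap_parabolic hiff)])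
  have hak : (a : ℕ) < k := by
    by_contra hak
    have hbk : ¬ (b : ℕ) < k := fun hbk => hak (lt_trans (Fin.lt_def.mp hab) hbk)
    exact hside ⟨fun h => absurd h hak, fun h => absurd h hbk⟩
  have hbk : k ≤ (b : ℕ) := by
    by_contra hbk
    push_neg at hbk
    exact hside ⟨fun _ => hbk, fun _ => hak⟩
  obtain ⟨h1, h2⟩ := swap_len_facts hab hlen
  exact ⟨a, b, hab, hak, hbk, hw, h1, h2⟩

lemma crux_step {u : Perm (Fin n)} {a b : Fin n} (hab : a < b) (hak : (a : ℕ) < k)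
    (hbk : k ≤ (b : ℕ)) (hord : u a < u b)
    (hnomid : ∀ c : Fin n, a < c → c < b → ¬(u a < u c ∧ u c < u b))
    {i j : Fin n} (hij : i < j) (hblk : (j : ℕ) < k ∨ k ≤ (i : ℕ))
    (hwin : (u * Equiv.swap a b) j < (u * Equiv.swap a b) i) : u j < u i := by
  simp only [Perm.mul_apply] at hwin
  rcases hblk with hblk | hblk
  · have hik : (i : ℕ) < k := (Fin.lt_def.mp hij).trans hblk
    have hib : i ≠ b := fun h => absurd hbk (by rw [← h]; omega)
    have hjb : j ≠ b := fun h => absurd hbk (by rw [← h]; omega)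
    by_cases hja : j = a
    · have hia : i ≠ a := ne_of_lt (hja ▸ hij)
      rw [hja, Equiv.swap_apply_left, Equiv.swap_apply_of_ne_of_ne hia hib] at hwin
      rw [hja]
      exact hord.trans hwin
    · by_cases hia : i = a
      · rw [hia, Equiv.swap_apply_left, Equiv.swap_apply_of_ne_of_ne hja hjb] at hwin
        rw [hia]
        by_contra hno
        have hne : u a ≠ u j := u.injective.ne (Ne.symm hja)
        have hlt : u a < u j := hne.lt_or_gt.resolve_right hno
        exact hnomid j (hia ▸ hij) (Fin.lt_def.mpr (lt_of_lt_of_le hblk hbk)) ⟨hlt, hwin⟩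
      · rwa [Equiv.swap_apply_of_ne_of_ne hia hib, Equiv.swap_apply_of_ne_of_ne hja hjb] at hwin
  · have hjk : k ≤ (j : ℕ) := hblk.trans (le_of_lt (Fin.lt_def.mp hij))
    have hia : i ≠ a := fun h => absurd hak (by rw [← h]; omega)
    have hja : j ≠ a := fun h => absurd hak (by rw [← h]; omega)
    by_cases hib : i = b
    · have hjb : j ≠ b := ne_of_gt (hib ▸ hij)
      rw [hib, Equiv.swap_apply_right, Equiv.swap_apply_of_ne_of_ne hja hjb] at hwin
      rw [hib]
      exact hwin.trans hord
    · by_cases hjb : j = b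
      · rw [hjb, Equiv.swap_apply_right, Equiv.swap_apply_of_ne_of_ne hia hib] at hwin
        rw [hjb]
        by_contra hno
        have hne : u i ≠ u b := u.injective.ne hib
        have hlt : u i < u b := hne.lt_or_gt.resolve_right (fun h => hno h) -- hno : ¬ u b < u i
        exact hnomid i (Fin.lt_def.mpr (lt_of_lt_of_le hak hblk)) (hjb ▸ hij) ⟨hwin, hlt⟩
      · rwa [Equiv.swap_apply_of_ne_of_ne hia hib, Equiv.swap_apply_of_ne_of_ne hja hjb] at hwin

lemma crux {u w : Perm (Fin n)} (h : kBruhatLE n k u w) :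
    ∀ i j : Fin n, i < j → ((j : ℕ) < k ∨ k ≤ (i : ℕ)) → w j < w i → u j < u i := by
  induction h with
  | refl => exact fun i j _ _ h => h
  | tail hm step ih =>
    intro i j hij hblk hw
    obtain ⟨a, b, hab, hak, hbk, hweq, hord, hnomid⟩ := kCover_struct step
    exact ih i j hij hblk (crux_step hab hak hbk hord hnomid hij hblk (hweq ▸ hw))

lemma card_filter_lt (hk : k ≤ n) :
    ((Finset.univ : Finset (Fin n)).filter fun i : Fin n => (i : ℕ) < k).card = k := by
  have : ((Finset.univ : Finset (Fin n)).filter fun i : Fin n => (i : ℕ) < k).card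
      = (Finset.univ : Finset (Fin k)).card := by
    refine Finset.card_bij'
      (fun (a : Fin n) (ha : a ∈ (Finset.univ.filter fun i : Fin n => (i : ℕ) < k)) =>
        (⟨(a : ℕ), (Finset.mem_filter.mp ha).2⟩ : Fin k))
      (fun (b : Fin k) (_ : b ∈ (Finset.univ : Finset (Fin k))) =>
        (⟨(b : ℕ), lt_of_lt_of_le b.2 hk⟩ : Fin n)) ?_ ?_ ?_ ?_
    · intro a ha; exact Finset.mem_univ _
    · intro b hb; simp [Finset.mem_filter]
    · intro a ha; exact Fin.ext rfl
    · intro b hb; exact Fin.ext rfl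
  rw [this, Finset.card_univ, Fintype.card_fin]

lemma sigmaSet_card (hk : k ≤ n) (v : Perm (Fin n)) : (sigmaSet n k v).card = k := by
  unfold sigmaSet
  rw [Finset.card_image_of_injective _ v.injective, card_filter_lt hk]

lemma compl_card {S : Finset (Fin n)} (hS : S.card = k) : Sᶜ.card = n - k := by
  rw [Finset.card_compl, hS]
  simp

section construct

/-- the Grassmannian sort with value set S -/
noncomputable def gfun (S : Finset (Fin n)) (hS : S.card = k) : Fin n → Fin n := fun i =>
  if h : (i : ℕ) < k then S.orderEmbOfFin hS ⟨(i : ℕ), h⟩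
  else Sᶜ.orderEmbOfFin (compl_card hS) ⟨(i : ℕ) - k, by have := i.2; omega⟩

lemma gfun_mem {S : Finset (Fin n)} (hS : S.card = k) {i : Fin n} (h : (i : ℕ) < k) : gfun S hS i ∈ S := by
  rw [gfun, dif_pos h]; exact Finset.orderEmbOfFin_mem _ _ _

lemma gfun_not_mem {S : Finset (Fin n)} (hS : S.card = k) {i : Fin n} (h : ¬ (i : ℕ) < k) : gfun S hS i ∈ Sᶜ := by
  rw [gfun, dif_neg h]; exact Finset.orderEmbOfFin_mem _ _ _

lemma gfun_inj {S : Finset (Fin n)} (hS : S.card = k) : Function.Injective (gfun S hS) := by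
  intro i j hf
  by_cases hi : (i : ℕ) < k <;> by_cases hj : (j : ℕ) < k
  · rw [gfun, dif_pos hi, gfun, dif_pos hj] at hf
    have := (S.orderEmbOfFin hS).injective hf
    exact Fin.ext (by simpa using congrArg Fin.val this)
  · exact absurd (hf ▸ gfun_mem hS hi) (Finset.mem_compl.mp (gfun_not_mem hS hj))
  · exact absurd (hf ▸ gfun_mem hS hj) (Finset.mem_compl.mp (gfun_not_mem hS hi))
  · rw [gfun, dif_neg hi, gfun, dif_neg hj] at hf
    have := (Sᶜ.orderEmbOfFin (compl_card hS)).injective hf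
    have h2 : (i : ℕ) - k = (j : ℕ) - k := congrArg Fin.val this
    exact Fin.ext (by omega)

noncomputable def gperm (S : Finset (Fin n)) (hS : S.card = k) : Perm (Fin n) :=
  Equiv.ofBijective _ (Finite.injective_iff_bijective.mp (gfun_inj hS))

lemma gperm_apply {S : Finset (Fin n)} (hS : S.card = k) (i : Fin n) : gperm S hS i = gfun S hS i := rfl

lemma gperm_grass {S : Finset (Fin n)} (hS : S.card = k) : IsGrassmannian n k (gperm S hS) := by
  intro i j hij hblk
  rw [gperm_apply hS, gperm_apply hS]
  rcases hblk with hj | hi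
  · have hi : (i : ℕ) < k := (Fin.lt_def.mp hij).trans hj
    rw [gfun, dif_pos hi, gfun, dif_pos hj]
    have : (⟨(i : ℕ), hi⟩ : Fin k) < ⟨(j : ℕ), hj⟩ := hij
    exact (S.orderEmbOfFin hS).strictMono this
  · have hj : ¬ (j : ℕ) < k := by have := Fin.lt_def.mp hij; omega
    rw [gfun, dif_neg (by omega : ¬ (i : ℕ) < k), gfun, dif_neg hj]
    have : (⟨(i : ℕ) - k, by have := i.2; omega⟩ : Fin (n - k))
        < ⟨(j : ℕ) - k, by have := j.2; omega⟩ := by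
      rw [Fin.lt_def]
      have := Fin.lt_def.mp hij
      simp only
      omega
    exact (Sᶜ.orderEmbOfFin (compl_card hS)).strictMono this

lemma gperm_sigmaSet {S : Finset (Fin n)} (hS : S.card = k) (hk : k ≤ n) : sigmaSet n k (gperm S hS) = S := by
  apply Finset.eq_of_subset_of_card_le
  · intro s hs
    obtain ⟨i, hi, rfl⟩ := Finset.mem_image.mp hs
    simp only [mem_filter, mem_univ, true_and] at hi
    exact gfun_mem hS hi
  · rw [hS, sigmaSet_card hk]

/-- the anti-Grassmannian sort with value set S -/
noncomputable def afun (S : Finset (Fin n)) (hS : S.card = k) : Fin n → Fin n := fun i =>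
  if h : (i : ℕ) < k then S.orderEmbOfFin hS ⟨k - 1 - (i : ℕ), by omega⟩
  else Sᶜ.orderEmbOfFin (compl_card hS) ⟨n - 1 - (i : ℕ), by have h1 := i.2; omega⟩

lemma afun_mem {S : Finset (Fin n)} (hS : S.card = k) {i : Fin n} (h : (i : ℕ) < k) : afun S hS i ∈ S := by
  rw [afun, dif_pos h]; exact Finset.orderEmbOfFin_mem _ _ _

lemma afun_not_mem {S : Finset (Fin n)} (hS : S.card = k) {i : Fin n} (h : ¬ (i : ℕ) < k) : afun S hS i ∈ Sᶜ := by
  rw [afun, dif_neg h]; exact Finset.orderEmbOfFin_mem _ _ _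

lemma afun_inj {S : Finset (Fin n)} (hS : S.card = k) : Function.Injective (afun S hS) := by
  intro i j hf
  by_cases hi : (i : ℕ) < k <;> by_cases hj : (j : ℕ) < k
  · rw [afun, dif_pos hi, afun, dif_pos hj] at hf
    have := (S.orderEmbOfFin hS).injective hf
    have h2 : k - 1 - (i : ℕ) = k - 1 - (j : ℕ) := congrArg Fin.val this
    exact Fin.ext (by omega)
  · exact absurd (hf ▸ afun_mem hS hi) (Finset.mem_compl.mp (afun_not_mem hS hj))
  · exact absurd (hf ▸ afun_mem hS hj) (Finset.mem_compl.mp (afun_not_mem hS hi))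
  · rw [afun, dif_neg hi, afun, dif_neg hj] at hf
    have := (Sᶜ.orderEmbOfFin (compl_card hS)).injective hf
    have h2 : n - 1 - (i : ℕ) = n - 1 - (j : ℕ) := congrArg Fin.val this
    have hi2 := i.2; have hj2 := j.2
    exact Fin.ext (by omega)

noncomputable def aperm (S : Finset (Fin n)) (hS : S.card = k) : Perm (Fin n) :=
  Equiv.ofBijective _ (Finite.injective_iff_bijective.mp (afun_inj hS))

lemma aperm_apply {S : Finset (Fin n)} (hS : S.card = k) (i : Fin n) : aperm S hS i = afun S hS i := rfl

lemma aperm_anti {S : Finset (Fin n)} (hS : S.card = k) : IsAntiGrassmannian n k (aperm S hS) := by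
  intro i j hij hblk
  rw [aperm_apply hS, aperm_apply hS]
  rcases hblk with hj | hi
  · have hi : (i : ℕ) < k := (Fin.lt_def.mp hij).trans hj
    simp only [afun]
    rw [dif_pos hj, dif_pos hi]
    have : (⟨k - 1 - (j : ℕ), by omega⟩ : Fin k) < ⟨k - 1 - (i : ℕ), by omega⟩ := by
      rw [Fin.lt_def]
      have := Fin.lt_def.mp hij
      simp only
      omega
    exact (S.orderEmbOfFin hS).strictMono this
  · have hj : ¬ (j : ℕ) < k := by have := Fin.lt_def.mp hij; omega
    simp only [afun]
    rw [dif_neg hj, dif_neg (by omega : ¬ (i : ℕ) < k)]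
    have : (⟨n - 1 - (j : ℕ), by have := j.2; omega⟩ : Fin (n - k))
        < ⟨n - 1 - (i : ℕ), by have := i.2; omega⟩ := by
      rw [Fin.lt_def]
      have h1 := Fin.lt_def.mp hij
      have h2 := j.2
      simp only
      omega
    exact (Sᶜ.orderEmbOfFin (compl_card hS)).strictMono this

lemma aperm_sigmaSet {S : Finset (Fin n)} (hS : S.card = k) (hk : k ≤ n) : sigmaSet n k (aperm S hS) = S := by
  apply Finset.eq_of_subset_of_card_le
  · intro s hs
    obtain ⟨i, hi, rfl⟩ := Finset.mem_image.mp hs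
    simp only [mem_filter, mem_univ, true_and] at hi
    exact afun_mem hS hi
  · rw [hS, sigmaSet_card hk]

end construct

lemma grass_eq_gperm (hk : k ≤ n) {y : Perm (Fin n)} (hy : IsGrassmannian n k y) :
    y = gperm (sigmaSet n k y) (sigmaSet_card hk y) := by
  have hS : (sigmaSet n k y).card = k := sigmaSet_card hk y
  have hfirst : (fun c : Fin k => y ⟨(c : ℕ), lt_of_lt_of_le c.2 hk⟩)
      = fun c => ((sigmaSet n k y).orderEmbOfFin (sigmaSet_card hk y) c : Fin n) := by
    apply Finset.orderEmbOfFin_unique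
    · intro c
      exact apply_mem_sigmaSet_iff.mpr c.2
    · intro c c' hcc
      exact hy _ _ (Fin.lt_def.mpr hcc) (Or.inl c'.2)
  have hsecond : (fun c : Fin (n - k) => y ⟨k + (c : ℕ), by have := c.2; omega⟩)
      = fun c => ((sigmaSet n k y)ᶜ.orderEmbOfFin (compl_card (sigmaSet_card hk y)) c : Fin n) := by
    apply Finset.orderEmbOfFin_unique
    · intro c
      rw [Finset.mem_compl]
      intro hmem
      have h2 := apply_mem_sigmaSet_iff.mp hmem
      simp only at h2
      omega
    · intro c c' hcc
      apply hy _ _ (Fin.lt_def.mpr (by simp only; omega)) (Or.inr (by simp only; omega))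
  apply Equiv.ext
  intro i
  by_cases h : (i : ℕ) < k
  · have heq := congrFun hfirst ⟨(i : ℕ), h⟩
    simp only at heq
    rw [gperm_apply, gfun, dif_pos h]
    rw [show (⟨(i : ℕ), lt_of_lt_of_le h hk⟩ : Fin n) = i from Fin.ext rfl] at heq
    exact heq
  · have hc : (i : ℕ) - k < n - k := by have := i.2; omega
    have heq := congrFun hsecond ⟨(i : ℕ) - k, hc⟩
    simp only at heq
    rw [gperm_apply, gfun, dif_neg h]
    rw [show (⟨k + ((i : ℕ) - k), by have := i.2; omega⟩ : Fin n) = i from Fin.ext (by simp only; omega)] at heq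
    exact heq

lemma anti_eq_aperm (hk : k ≤ n) {y : Perm (Fin n)} (hy : IsAntiGrassmannian n k y) :
    y = aperm (sigmaSet n k y) (sigmaSet_card hk y) := by
  have hfirst : (fun c : Fin k => y ⟨k - 1 - (c : ℕ), by have := c.2; omega⟩)
      = fun c => ((sigmaSet n k y).orderEmbOfFin (sigmaSet_card hk y) c : Fin n) := by
    apply Finset.orderEmbOfFin_unique
    · intro c
      exact apply_mem_sigmaSet_iff.mpr (by simp only; have := c.2; omega)
    · intro c c' hcc
      have hc := c.2
      have hc' := c'.2
      exact hy _ _ (Fin.lt_def.mpr (by simp only; omega)) (Or.inl (by simp only; omega))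
  have hsecond : (fun c : Fin (n - k) => y ⟨n - 1 - (c : ℕ), by have := c.2; omega⟩)
      = fun c => ((sigmaSet n k y)ᶜ.orderEmbOfFin (compl_card (sigmaSet_card hk y)) c : Fin n) := by
    apply Finset.orderEmbOfFin_unique
    · intro c
      rw [Finset.mem_compl]
      intro hmem
      have h2 := apply_mem_sigmaSet_iff.mp hmem
      simp only at h2
      have := c.2
      omega
    · intro c c' hcc
      have hc := c.2
      have hc' := c'.2
      exact hy _ _ (Fin.lt_def.mpr (by simp only; omega)) (Or.inr (by simp only; omega))
  apply Equiv.ext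
  intro i
  by_cases h : (i : ℕ) < k
  · have heq := congrFun hfirst ⟨k - 1 - (i : ℕ), by omega⟩
    simp only at heq
    rw [aperm_apply, afun, dif_pos h]
    rw [show (⟨k - 1 - (k - 1 - (i : ℕ)), by omega⟩ : Fin n) = i from Fin.ext (by simp only; omega)] at heq
    exact heq
  · have hc : n - 1 - (i : ℕ) < n - k := by have := i.2; omega
    have heq := congrFun hsecond ⟨n - 1 - (i : ℕ), hc⟩
    simp only at heq
    rw [aperm_apply, afun, dif_neg h]
    rw [show (⟨n - 1 - (n - 1 - (i : ℕ)), by have := i.2; omega⟩ : Fin n) = i from Fin.ext (by simp only; have := i.2; omega)] at heq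
    exact heq


lemma gperm_symm_lt_iff {S : Finset (Fin n)} (hS : S.card = k) (s : Fin n) :
    (((gperm S hS).symm s : Fin n) : ℕ) < k ↔ s ∈ S := by
  constructor
  · intro h
    have := gfun_mem hS h
    rwa [← gperm_apply hS, Equiv.apply_symm_apply] at this
  · intro h
    by_contra hlt
    have := gfun_not_mem hS hlt
    rw [← gperm_apply hS, Equiv.apply_symm_apply] at this
    exact (Finset.mem_compl.mp this) h

lemma aperm_symm_lt_iff {S : Finset (Fin n)} (hS : S.card = k) (s : Fin n) :
    (((aperm S hS).symm s : Fin n) : ℕ) < k ↔ s ∈ S := by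
  constructor
  · intro h
    have := afun_mem hS h
    rwa [← aperm_apply hS, Equiv.apply_symm_apply] at this
  · intro h
    by_contra hlt
    have := afun_not_mem hS hlt
    rw [← aperm_apply hS, Equiv.apply_symm_apply] at this
    exact (Finset.mem_compl.mp this) h

lemma gperm_congr {S S' : Finset (Fin n)} (h : S = S') (hS : S.card = k) (hS' : S'.card = k) :
    gperm S hS = gperm S' hS' := by subst h; rfl

lemma aperm_congr {S S' : Finset (Fin n)} (h : S = S') (hS : S.card = k) (hS' : S'.card = k) :
    aperm S hS = aperm S' hS' := by subst h; rfl

lemma grass_unique (hk : k ≤ n) {y1 y2 : Perm (Fin n)} (h1 : IsGrassmannian n k y1)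
    (h2 : IsGrassmannian n k y2) (hss : sigmaSet n k y1 = sigmaSet n k y2) : y1 = y2 := by
  rw [grass_eq_gperm hk h1, grass_eq_gperm hk h2]
  exact gperm_congr hss _ _

lemma anti_unique (hk : k ≤ n) {y1 y2 : Perm (Fin n)} (h1 : IsAntiGrassmannian n k y1)
    (h2 : IsAntiGrassmannian n k y2) (hss : sigmaSet n k y1 = sigmaSet n k y2) : y1 = y2 := by
  rw [anti_eq_aperm hk h1, anti_eq_aperm hk h2]
  exact aperm_congr hss _ _

lemma eqvGen_invariant {p q : Perm (Fin n) × Perm (Fin n)}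
    (h : Relation.EqvGen (pairMove n k) p q) :
    p.1 * p.2⁻¹ = q.1 * q.2⁻¹ ∧ sigmaSet n k p.1 = sigmaSet n k q.1 ∧
      sigmaSet n k p.2 = sigmaSet n k q.2 := by
  induction h with
  | rel a b hr =>
    obtain ⟨z, hz, heq, -, -⟩ := hr
    rw [heq]
    refine ⟨by simp [mul_assoc], ?_, ?_⟩
    · exact (sigmaSet_mul_parabolic hz).symm
    · exact (sigmaSet_mul_parabolic hz).symm
  | refl a => exact ⟨rfl, rfl, rfl⟩
  | symm a b _ ih => exact ⟨ih.1.symm, ih.2.1.symm, ih.2.2.symm⟩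
  | trans a b c _ _ ih1 ih2 =>
    exact ⟨ih1.1.trans ih2.1, ih1.2.1.trans ih2.2.1, ih1.2.2.trans ih2.2.2⟩

lemma main (n k : ℕ) (hk : k ≤ n) (u w : Equiv.Perm (Fin n))
    (huw : kBruhatLE n k u w) :
    (∃! p : Equiv.Perm (Fin n) × Equiv.Perm (Fin n),
        Relation.EqvGen (pairMove n k) (u, w) p ∧ IsGrassmannian n k p.2) ∧
    (∃! p : Equiv.Perm (Fin n) × Equiv.Perm (Fin n),
        Relation.EqvGen (pairMove n k) (u, w) p ∧ IsAntiGrassmannian n k p.1) := by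
  have hcrux := crux huw
  constructor
  · -- Grassmannian part
    have hS : (sigmaSet n k w).card = k := sigmaSet_card hk w
    set y : Perm (Fin n) := gperm (sigmaSet n k w) hS with hy
    have hy_grass : IsGrassmannian n k y := gperm_grass hS
    set z : Perm (Fin n) := y⁻¹ * w with hz
    have hyz : y * z = w := by rw [hz]; group
    have hzpar : InParabolic n k z := by
      intro i
      have h1 : z i = y.symm (w i) := rfl
      rw [h1, gperm_symm_lt_iff hS]
      exact (apply_mem_sigmaSet_iff (v := w)).symm
    -- same-block structure of z-inversions
    have hblk_of_inv : ∀ p : Fin n × Fin n, p.1 < p.2 → z p.2 < z p.1 →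
        (((p.2 : ℕ) < k ∧ (p.1 : ℕ) < k) ∨ (k ≤ (p.1 : ℕ) ∧ k ≤ (p.2 : ℕ))) := by
      intro p h1 h2
      by_cases hp2 : (p.2 : ℕ) < k
      · exact Or.inl ⟨hp2, (Fin.lt_def.mp h1).trans hp2⟩
      · by_cases hp1 : (p.1 : ℕ) < k
        · exfalso
          have ha := (hzpar p.1).mp hp1
          have hb : ¬ ((z p.2 : Fin n) : ℕ) < k := fun hb => hp2 ((hzpar p.2).mpr hb)
          have := Fin.lt_def.mp h2
          omega
        · exact Or.inr ⟨le_of_not_gt hp1, le_of_not_gt hp2⟩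
    have hvblk : ∀ p : Fin n × Fin n, p.1 < p.2 → z p.2 < z p.1 →
        (((z p.1 : Fin n) : ℕ) < k ∨ k ≤ ((z p.2 : Fin n) : ℕ)) := by
      intro p h1 h2
      rcases hblk_of_inv p h1 h2 with ⟨ha, hb⟩ | ⟨ha, hb⟩
      · exact Or.inl ((hzpar p.1).mp hb)
      · refine Or.inr (le_of_not_gt fun hc => ?_)
        exact absurd ((hzpar p.2).mpr hc) (by omega)
    have hlen_w : len n (y * z) = len n y + len n z := by
      apply len_add_of_no_cancel
      intro p h1 h2
      exact asymm (hy_grass (z p.2) (z p.1) h2 (hvblk p h1 h2))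
    have hlen_u : len n ((u * z⁻¹) * z) = len n (u * z⁻¹) + len n z := by
      apply len_add_of_no_cancel
      intro p h1 h2 h3
      simp only [Perm.mul_apply, Perm.coe_inv, Equiv.symm_apply_apply] at h3
      have hwlt : w p.2 < w p.1 := by
        have := hy_grass (z p.2) (z p.1) h2 (hvblk p h1 h2)
        rw [← hyz]
        simpa [Perm.mul_apply] using this
      have hblk2 : ((p.2 : ℕ) < k ∨ k ≤ (p.1 : ℕ)) := by
        rcases hblk_of_inv p h1 h2 with ⟨ha, hb⟩ | ⟨ha, hb⟩
        · exact Or.inl ha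
        · exact Or.inr ha
      exact asymm (hcrux p.1 p.2 h1 hblk2 hwlt) h3
    have hmove : pairMove n k (u * z⁻¹, y) (u, w) := by
      refine ⟨z, hzpar, ?_, ?_, ?_⟩
      · have e1 : u * z⁻¹ * z = u := by group
        have e2 : y * z = w := hyz
        simp only [e1, e2]
      · exact hlen_u
      · exact hlen_w
    have hrel : Relation.EqvGen (pairMove n k) (u, w) (u * z⁻¹, y) :=
      Relation.EqvGen.symm _ _ (Relation.EqvGen.rel _ _ hmove)
    refine ⟨(u * z⁻¹, y), ⟨hrel, hy_grass⟩, ?_⟩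
    rintro q ⟨hq, hqg⟩
    have inv1 := eqvGen_invariant hq
    have inv2 := eqvGen_invariant hrel
    have hss : sigmaSet n k q.2 = sigmaSet n k y := inv1.2.2.symm.trans inv2.2.2
    have h2eq : q.2 = y := grass_unique hk hqg hy_grass hss
    have h1eq : q.1 = u * z⁻¹ := by
      have e := inv1.1.symm.trans inv2.1
      rw [h2eq] at e
      exact mul_right_cancel e
    exact Prod.ext h1eq h2eq
  · -- anti-Grassmannian part
    have hS : (sigmaSet n k u).card = k := sigmaSet_card hk u
    set x : Perm (Fin n) := aperm (sigmaSet n k u) hS with hx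
    have hx_anti : IsAntiGrassmannian n k x := aperm_anti hS
    set z : Perm (Fin n) := u⁻¹ * x with hz
    have huz : u * z = x := by rw [hz]; group
    have hzpar : InParabolic n k z := by
      intro i
      have h1 : z i = u.symm (x i) := rfl
      rw [h1, ← mem_sigmaSet_iff]
      constructor
      · intro h
        have := afun_mem hS h
        rwa [← aperm_apply hS, ← hx] at this
      · intro h
        by_contra hlt
        have := afun_not_mem hS hlt
        rw [← aperm_apply hS, ← hx] at this
        exact (Finset.mem_compl.mp this) h
    have hblk_of_inv : ∀ p : Fin n × Fin n, p.1 < p.2 → z p.2 < z p.1 →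
        (((p.2 : ℕ) < k ∧ (p.1 : ℕ) < k) ∨ (k ≤ (p.1 : ℕ) ∧ k ≤ (p.2 : ℕ))) := by
      intro p h1 h2
      by_cases hp2 : (p.2 : ℕ) < k
      · exact Or.inl ⟨hp2, (Fin.lt_def.mp h1).trans hp2⟩
      · by_cases hp1 : (p.1 : ℕ) < k
        · exfalso
          have ha := (hzpar p.1).mp hp1
          have hb : ¬ ((z p.2 : Fin n) : ℕ) < k := fun hb => hp2 ((hzpar p.2).mpr hb)
          have := Fin.lt_def.mp h2
          omega
        · exact Or.inr ⟨le_of_not_gt hp1, le_of_not_gt hp2⟩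
    have hxlt : ∀ p : Fin n × Fin n, p.1 < p.2 → z p.2 < z p.1 → x p.2 < x p.1 := by
      intro p h1 h2
      apply hx_anti p.1 p.2 h1
      rcases hblk_of_inv p h1 h2 with ⟨ha, hb⟩ | ⟨ha, hb⟩
      · exact Or.inl ha
      · exact Or.inr ha
    have hlen_u : len n (u * z) = len n u + len n z := by
      apply len_add_of_no_cancel
      intro p h1 h2 h3
      have e1 : u (z p.1) = x p.1 := by rw [← huz]; rfl
      have e2 : u (z p.2) = x p.2 := by rw [← huz]; rfl
      rw [e1, e2] at h3
      exact asymm (hxlt p h1 h2) h3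
    have hlen_w : len n (w * z) = len n w + len n z := by
      apply len_add_of_no_cancel
      intro p h1 h2 h3
      have hblk2 : (((z p.1 : Fin n) : ℕ) < k ∨ k ≤ ((z p.2 : Fin n) : ℕ)) := by
        rcases hblk_of_inv p h1 h2 with ⟨ha, hb⟩ | ⟨ha, hb⟩
        · exact Or.inl ((hzpar p.1).mp hb)
        · refine Or.inr (le_of_not_gt fun hc => ?_)
          exact absurd ((hzpar p.2).mpr hc) (by omega)
      have := hcrux (z p.2) (z p.1) h2 hblk2 h3
      have e1 : u (z p.1) = x p.1 := by rw [← huz]; rfl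
      have e2 : u (z p.2) = x p.2 := by rw [← huz]; rfl
      rw [e1, e2] at this
      exact asymm (hxlt p h1 h2) this
    have hmove : pairMove n k (u, w) (u * z, w * z) := ⟨z, hzpar, rfl, hlen_u, hlen_w⟩
    have hrel : Relation.EqvGen (pairMove n k) (u, w) (u * z, w * z) :=
      Relation.EqvGen.rel _ _ hmove
    have hx_eq : u * z = x := huz
    have hp1_anti : IsAntiGrassmannian n k (u * z) := hx_eq ▸ hx_anti
    refine ⟨(u * z, w * z), ⟨hrel, hp1_anti⟩, ?_⟩
    rintro q ⟨hq, hqa⟩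
    have inv1 := eqvGen_invariant hq
    have inv2 := eqvGen_invariant hrel
    have hss : sigmaSet n k q.1 = sigmaSet n k (u * z) := inv1.2.1.symm.trans inv2.2.1
    have h1eq : q.1 = u * z := anti_unique hk hqa hp1_anti hss
    have h2eq : q.2 = w * z := by
      have e := inv1.1.symm.trans inv2.1
      rw [h1eq] at e
      have := mul_left_cancel e
      exact inv_injective this
    exact Prod.ext h1eq h2eq

end S7

theorem stmt_7 (n k : ℕ) (hk : k ≤ n) (u w : Equiv.Perm (Fin n))
    (huw : kBruhatLE n k u w) :
    (∃! p : Equiv.Perm (Fin n) × Equiv.Perm (Fin n),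
        Relation.EqvGen (pairMove n k) (u, w) p ∧ IsGrassmannian n k p.2) ∧
    (∃! p : Equiv.Perm (Fin n) × Equiv.Perm (Fin n),
        Relation.EqvGen (pairMove n k) (u, w) p ∧ IsAntiGrassmannian n k p.1) := by
  exact S7.main n k hk u w huw
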